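/- arXiv:0707.0906 — 3 statements merged into one kernel-verified Lean document; each statement's English description precedes it below -/
import Mathlib

section
/- Let (G,μ) be an ergodic discrete measured groupoid with atom-free measure μ, and let A, B ⊂ G^0 be Borel subsets of positive measure. Then μ(s^{-1}(A) ∩ r^{-1}(B)) = ∞. -/
open MeasureTheory

/-- A (minimal formalization of a) discrete measured groupoid: a standard Borel groupoid
`G` with unit space `X`, Borel source and range maps with countable source fibers, and an
invariant measure `μ` on the unit space. -/
structure DMGroupoid (G X : Type) [MeasurableSpace G] [MeasurableSpace X] where
  s : G → X
  r : G → X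
  meas_s : Measurable s
  meas_r : Measurable r
  countable_fibers : ∀ x : X, (s ⁻¹' {x}).Countable
  μ : Measure X
  invariant : ∀ E : Set G, MeasurableSet E →
    ∫⁻ x, Measure.count (E ∩ s ⁻¹' {x}) ∂μ = ∫⁻ x, Measure.count (E ∩ r ⁻¹' {x}) ∂μ

/-- The extension of `μ` to a measure on the groupoid:
`μ(E) = ∫_{G⁰} #(E ∩ s⁻¹(x)) dμ(x)`. -/
noncomputable def DMGroupoid.gMeasure {G X : Type} [MeasurableSpace G] [MeasurableSpace X]
    (D : DMGroupoid G X) (E : Set G) : ENNReal :=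
  ∫⁻ x, Measure.count (E ∩ D.s ⁻¹' {x}) ∂D.μ

/-- Ergodicity (saturation form): for every Borel `A ⊆ G⁰` of positive measure the
saturation `A^G = {x : ∃ γ, s γ ∈ A, r γ = x}` has full measure. -/
def DMGroupoid.SatErgodic {G X : Type} [MeasurableSpace G] [MeasurableSpace X]
    (D : DMGroupoid G X) : Prop :=
  ∀ A : Set X, MeasurableSet A → D.μ A ≠ 0 →
    D.μ {x : X | ∃ γ : G, D.s γ ∈ A ∧ D.r γ = x}ᶜ = 0

section Helpers
open Set ENNReal

lemma exists_split {X : Type} [MeasurableSpace X] [StandardBorelSpace X]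
    (μ : Measure X) [IsFiniteMeasure μ] (hatom : ∀ x : X, μ {x} = 0)
    {S : Set X} (hS : MeasurableSet S) (h0 : μ S ≠ 0) :
    ∃ T : Set X, MeasurableSet T ∧ T ⊆ S ∧ μ T ≠ 0 ∧ μ (S \ T) ≠ 0 := by
  haveI : NullSingletonClass μ := ⟨hatom⟩
  obtain ⟨f, hf⟩ := exists_measurableEmbedding_real X
  set g : ℝ → ℝ≥0∞ := fun t => μ (S ∩ f ⁻¹' Set.Iic t) with hg
  have hmeas : ∀ t : ℝ, MeasurableSet (S ∩ f ⁻¹' Set.Iic t) := fun t =>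
    hS.inter (hf.measurable measurableSet_Iic)
  have hmono : ∀ {t t' : ℝ}, t ≤ t' → g t ≤ g t' := fun {t t'} h =>
    measure_mono (inter_subset_inter_right _ (preimage_mono (Iic_subset_Iic.2 h)))
  have hdiff : ∀ t : ℝ, g t = μ S → μ (S \ (S ∩ f ⁻¹' Set.Iic t)) = 0 := by
    intro t ht
    have ht' : μ (S ∩ f ⁻¹' Set.Iic t) = μ S := ht
    rw [measure_diff inter_subset_left (hmeas t).nullMeasurableSet (measure_ne_top μ _), ht',
      tsub_self]
  have key : ∃ t : ℝ, g t ≠ 0 ∧ g t ≠ μ S := by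
    by_contra hcon
    push_neg at hcon
    -- dichotomy
    have hdich : ∀ t : ℝ, g t = 0 ∨ g t = μ S := by
      intro t
      by_cases h : g t = 0
      · exact Or.inl h
      · exact Or.inr (hcon t h)
    -- there is n with g n ≠ 0
    have hSunion : S = ⋃ n : ℕ, S ∩ f ⁻¹' Set.Iic (n : ℝ) := by
      ext x
      simp only [mem_iUnion, mem_inter_iff, mem_preimage, mem_Iic]
      constructor
      · intro hx
        obtain ⟨n, hn⟩ := exists_nat_ge (f x)
        exact ⟨n, hx, hn⟩
      · rintro ⟨n, hx, -⟩; exact hx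
    have hub : ∃ n : ℕ, g (n : ℝ) ≠ 0 := by
      by_contra hall
      push_neg at hall
      apply h0
      rw [hSunion]
      exact measure_iUnion_null hall
    obtain ⟨n0, hn0⟩ := hub
    -- T0 nonempty
    set T0 : Set ℝ := {t : ℝ | g t = 0} with hT0
    have hT0ne : T0.Nonempty := by
      by_contra hemp
      rw [Set.not_nonempty_iff_eq_empty] at hemp
      have hall : ∀ t : ℝ, g t = μ S := by
        intro t
        rcases hdich t with h | h
        · exact absurd (Set.eq_empty_iff_forall_notMem.1 hemp t h) (fun h => h)
        · exact h
      -- intersection of S ∩ f⁻¹ Iic (-n) is empty but full measure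
      have hinter : (⋂ n : ℕ, S ∩ f ⁻¹' Set.Iic (-(n : ℝ))) = ∅ := by
        ext x
        simp only [mem_iInter, mem_inter_iff, mem_preimage, mem_Iic, mem_empty_iff_false,
          iff_false, not_forall]
        obtain ⟨n, hn⟩ := exists_nat_gt (-(f x))
        exact ⟨n, fun hmem => absurd hmem.2 (not_le.2 (by linarith))⟩
      have hcover : S ⊆ (⋂ n : ℕ, S ∩ f ⁻¹' Set.Iic (-(n : ℝ))) ∪
          ⋃ n : ℕ, S \ (S ∩ f ⁻¹' Set.Iic (-(n : ℝ))) := by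
        intro x hx
        by_cases hall2 : ∀ n : ℕ, x ∈ S ∩ f ⁻¹' Set.Iic (-(n : ℝ))
        · exact Or.inl (mem_iInter.2 hall2)
        · push_neg at hall2
          obtain ⟨n, hn⟩ := hall2
          exact Or.inr (mem_iUnion.2 ⟨n, hx, hn⟩)
      apply h0
      refine le_antisymm ?_ (zero_le)
      calc μ S ≤ μ ((⋂ n : ℕ, S ∩ f ⁻¹' Set.Iic (-(n : ℝ))) ∪
          ⋃ n : ℕ, S \ (S ∩ f ⁻¹' Set.Iic (-(n : ℝ)))) := measure_mono hcover
        _ ≤ μ (⋂ n : ℕ, S ∩ f ⁻¹' Set.Iic (-(n : ℝ))) +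
            μ (⋃ n : ℕ, S \ (S ∩ f ⁻¹' Set.Iic (-(n : ℝ)))) := measure_union_le _ _
        _ = 0 := by
            rw [hinter, measure_empty, measure_iUnion_null fun n => hdiff _ (hall _),
              add_zero]
    have hbdd : BddAbove T0 := by
      refine ⟨(n0 : ℝ), fun t ht => ?_⟩
      by_contra hlt
      push_neg at hlt
      exact hn0 (le_antisymm (ht ▸ hmono hlt.le) (zero_le))
    set c : ℝ := sSup T0 with hc
    have hlt0 : ∀ t : ℝ, t < c → g t = 0 := by
      intro t ht
      obtain ⟨t', ht', htt'⟩ := exists_lt_of_lt_csSup hT0ne ht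
      exact le_antisymm (ht' ▸ hmono htt'.le) (zero_le)
    have hgt : ∀ t : ℝ, c < t → g t = μ S := by
      intro t ht
      rcases hdich t with h | h
      · exact absurd (le_csSup hbdd h) (not_le.2 ht)
      · exact h
    -- μ (S ∩ f⁻¹ Iio c) = 0
    have hIio : μ (S ∩ f ⁻¹' Set.Iio c) = 0 := by
      have : S ∩ f ⁻¹' Set.Iio c = ⋃ n : ℕ, S ∩ f ⁻¹' Set.Iic (c - 1 / ((n : ℝ) + 1)) := by
        ext x
        simp only [mem_iUnion, mem_inter_iff, mem_preimage, mem_Iic, mem_Iio]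
        constructor
        · rintro ⟨hx, hlt⟩
          obtain ⟨n, hn⟩ := exists_nat_one_div_lt (sub_pos.2 hlt)
          exact ⟨n, hx, by linarith⟩
        · rintro ⟨n, hx, hle⟩
          have h1 : (0 : ℝ) < 1 / ((n : ℝ) + 1) := by positivity
          exact ⟨hx, by linarith⟩
      rw [this]
      refine measure_iUnion_null fun n => hlt0 _ ?_
      have h1 : (0 : ℝ) < 1 / ((n : ℝ) + 1) := by positivity
      linarith
    -- g c = μ S
    have hgc : g c = μ S := by
      refine le_antisymm (measure_mono inter_subset_left) ?_
      have hinter : S ∩ f ⁻¹' Set.Iic c = ⋂ n : ℕ, S ∩ f ⁻¹' Set.Iic (c + 1 / ((n : ℝ) + 1)) := by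
        ext x
        simp only [mem_iInter, mem_inter_iff, mem_preimage, mem_Iic]
        constructor
        · rintro ⟨hx, hle⟩ n
          have h1 : (0 : ℝ) < 1 / ((n : ℝ) + 1) := by positivity
          exact ⟨hx, by linarith⟩
        · intro h
          refine ⟨(h 0).1, ?_⟩
          by_contra hlt
          push_neg at hlt
          obtain ⟨n, hn⟩ := exists_nat_one_div_lt (sub_pos.2 hlt)
          exact absurd (h n).2 (not_le.2 (by linarith))
      have hcover : S ⊆ (S ∩ f ⁻¹' Set.Iic c) ∪
          ⋃ n : ℕ, S \ (S ∩ f ⁻¹' Set.Iic (c + 1 / ((n : ℝ) + 1))) := by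
        intro x hx
        by_cases hall2 : ∀ n : ℕ, x ∈ S ∩ f ⁻¹' Set.Iic (c + 1 / ((n : ℝ) + 1))
        · exact Or.inl (hinter ▸ mem_iInter.2 hall2)
        · push_neg at hall2
          obtain ⟨n, hn⟩ := hall2
          exact Or.inr (mem_iUnion.2 ⟨n, hx, hn⟩)
      have hnull : μ (⋃ n : ℕ, S \ (S ∩ f ⁻¹' Set.Iic (c + 1 / ((n : ℝ) + 1)))) = 0 := by
        refine measure_iUnion_null fun n => hdiff _ (hgt _ ?_)
        have h1 : (0 : ℝ) < 1 / ((n : ℝ) + 1) := by positivity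
        linarith
      calc μ S ≤ μ (S ∩ f ⁻¹' Set.Iic c) +
          μ (⋃ n : ℕ, S \ (S ∩ f ⁻¹' Set.Iic (c + 1 / ((n : ℝ) + 1)))) :=
            le_trans (measure_mono hcover) (measure_union_le _ _)
        _ = g c := by rw [hnull, add_zero]
    -- contradiction via atom at c
    have hsub : S ∩ f ⁻¹' Set.Iic c ⊆ (S ∩ f ⁻¹' Set.Iio c) ∪ f ⁻¹' {c} := by
      rintro x ⟨hx, hle⟩
      rcases (lt_or_eq_of_le (Set.mem_Iic.1 hle) : f x < c ∨ f x = c) with h | h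
      · exact Or.inl ⟨hx, h⟩
      · exact Or.inr h
    have hsing : μ (f ⁻¹' {c}) = 0 := by
      refine Set.Subsingleton.measure_zero ?_ μ
      intro a ha b hb
      exact hf.injective (ha.trans hb.symm)
    apply h0
    refine le_antisymm ?_ (zero_le)
    calc μ S = g c := hgc.symm
      _ ≤ μ (S ∩ f ⁻¹' Set.Iio c) + μ (f ⁻¹' {c}) :=
          le_trans (measure_mono hsub) (measure_union_le _ _)
      _ = 0 := by rw [hIio, hsing, add_zero]
  obtain ⟨t, ht0, htS⟩ := key
  refine ⟨S ∩ f ⁻¹' Set.Iic t, hmeas t, inter_subset_left, ht0, ?_⟩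
  intro hdz
  apply htS
  refine le_antisymm (measure_mono inter_subset_left) ?_
  calc μ S ≤ μ (S ∩ f ⁻¹' Set.Iic t) + μ (S \ (S ∩ f ⁻¹' Set.Iic t)) := by
        refine le_trans (measure_mono ?_) (measure_union_le _ _)
        intro x hx
        by_cases h : x ∈ S ∩ f ⁻¹' Set.Iic t
        · exact Or.inl h
        · exact Or.inr ⟨hx, h⟩
    _ = g t := by rw [hdz, add_zero]

lemma exists_disjoint_seq {X : Type} [MeasurableSpace X] [StandardBorelSpace X]
    (μ : Measure X) [IsFiniteMeasure μ] (hatom : ∀ x : X, μ {x} = 0)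
    {A : Set X} (hA : MeasurableSet A) (hA0 : μ A ≠ 0) :
    ∃ Aseq : ℕ → Set X, (∀ n, MeasurableSet (Aseq n)) ∧ (∀ n, μ (Aseq n) ≠ 0) ∧
      (∀ n, Aseq n ⊆ A) ∧ (∀ m n, m ≠ n → Disjoint (Aseq m) (Aseq n)) := by
  classical
  set g : Set X → Set X := fun S =>
    if h : MeasurableSet S ∧ μ S ≠ 0 then
      S \ Classical.choose (exists_split μ hatom h.1 h.2) else ∅ with hgdef
  have hstep : ∀ S : Set X, MeasurableSet S → μ S ≠ 0 →
      MeasurableSet (g S) ∧ μ (g S) ≠ 0 ∧ g S ⊆ S ∧ μ (S \ g S) ≠ 0 := by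
    intro S hm h0
    have hcond : MeasurableSet S ∧ μ S ≠ 0 := ⟨hm, h0⟩
    obtain ⟨Tm, Tsub, T0, hrest⟩ := Classical.choose_spec (exists_split μ hatom hm h0)
    have hgS : g S = S \ Classical.choose (exists_split μ hatom hm h0) := by
      rw [hgdef]; simp only [dif_pos hcond]
    refine ⟨hgS ▸ hm.diff Tm, hgS ▸ hrest, hgS ▸ Set.diff_subset, ?_⟩
    rw [hgS, Set.diff_diff_cancel_left Tsub]
    exact T0
  set R : ℕ → Set X := fun n => g^[n] A with hR
  have hRsucc : ∀ n, R (n + 1) = g (R n) := fun n => Function.iterate_succ_apply' g n A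
  have hRP : ∀ n, MeasurableSet (R n) ∧ μ (R n) ≠ 0 := by
    intro n
    induction n with
    | zero => exact ⟨hA, hA0⟩
    | succ n ih =>
      rw [hRsucc]
      exact ⟨(hstep _ ih.1 ih.2).1, (hstep _ ih.1 ih.2).2.1⟩
  have hanti : Antitone R := antitone_nat_of_succ_le fun n => by
    rw [hRsucc]; exact (hstep _ (hRP n).1 (hRP n).2).2.2.1
  have hRA : ∀ n, R n ⊆ A := fun n => by
    have := hanti (Nat.zero_le n); exact this
  refine ⟨fun n => R n \ R (n + 1), fun n => (hRP n).1.diff (hRP (n + 1)).1,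
    fun n => ?_, fun n => (Set.diff_subset).trans (hRA n), ?_⟩
  · show μ (R n \ R (n + 1)) ≠ 0
    rw [hRsucc]
    exact (hstep _ (hRP n).1 (hRP n).2).2.2.2
  · have key : ∀ m n : ℕ, m < n → Disjoint (R m \ R (m + 1)) (R n \ R (n + 1)) := by
      intro m n hmn
      have h1 : R n \ R (n + 1) ⊆ R (m + 1) := (Set.diff_subset).trans (hanti hmn)
      exact Set.disjoint_of_subset_right h1 disjoint_sdiff_left
    intro m n hmn
    rcases lt_or_gt_of_ne hmn with h | h
    · exact key m n h
    · exact (key n m h).symm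

lemma sum_lintegral_le {α : Type} [MeasurableSpace α] (μ : Measure α)
    (f : ℕ → α → ENNReal) (N : ℕ) :
    ∑ n ∈ Finset.range N, ∫⁻ x, f n x ∂μ ≤ ∫⁻ x, ∑ n ∈ Finset.range N, f n x ∂μ := by
  induction N with
  | zero => simp
  | succ N ih =>
    calc ∑ n ∈ Finset.range (N + 1), ∫⁻ x, f n x ∂μ
        = (∑ n ∈ Finset.range N, ∫⁻ x, f n x ∂μ) + ∫⁻ x, f N x ∂μ := Finset.sum_range_succ _ _
      _ ≤ (∫⁻ x, ∑ n ∈ Finset.range N, f n x ∂μ) + ∫⁻ x, f N x ∂μ := add_le_add_left ih _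
      _ ≤ ∫⁻ x, (∑ n ∈ Finset.range N, f n x) + f N x ∂μ := le_lintegral_add _ _
      _ = ∫⁻ x, ∑ n ∈ Finset.range (N + 1), f n x ∂μ := by
          simp_rw [Finset.sum_range_succ]

end Helpers

/-- for an ergodic discrete measured groupoid with atom-free unit space
measure and Borel sets `A`, `B` of positive measure, `μ(s⁻¹(A) ∩ r⁻¹(B)) = ∞`. -/
theorem gMeasure_inter_infinite {G X : Type}
    [MeasurableSpace G] [MeasurableSpace X]
    [StandardBorelSpace G] [StandardBorelSpace X]
    (D : DMGroupoid G X) [IsProbabilityMeasure D.μ]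
    (herg : D.SatErgodic) (hatom : ∀ x : X, D.μ {x} = 0)
    (A B : Set X) (hA : MeasurableSet A) (hB : MeasurableSet B)
    (hA0 : D.μ A ≠ 0) (hB0 : D.μ B ≠ 0) :
    D.gMeasure (D.s ⁻¹' A ∩ D.r ⁻¹' B) = ⊤ := by
  classical
  obtain ⟨Aseq, hmeasA, hposA, hsubA, hdisjA⟩ := exists_disjoint_seq D.μ hatom hA hA0
  set E : Set G := D.s ⁻¹' A ∩ D.r ⁻¹' B with hE
  set En : ℕ → Set G := fun n => D.s ⁻¹' (Aseq n) ∩ D.r ⁻¹' B with hEn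
  have hEnmeas : ∀ n, MeasurableSet (En n) :=
    fun n => (D.meas_s (hmeasA n)).inter (D.meas_r hB)
  have hEnsub : ∀ n, En n ⊆ E :=
    fun n => Set.inter_subset_inter_left _ (Set.preimage_mono (hsubA n))
  -- each piece contributes at least μ B
  have hlow : ∀ n, D.μ B ≤ D.gMeasure (En n) := by
    intro n
    rw [DMGroupoid.gMeasure, D.invariant _ (hEnmeas n)]
    set Nn : Set X := toMeasurable D.μ {x : X | ∃ γ : G, D.s γ ∈ Aseq n ∧ D.r γ = x}ᶜ with hNn
    have hNn0 : D.μ Nn = 0 := by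
      rw [hNn, measure_toMeasurable]
      exact herg _ (hmeasA n) (hposA n)
    have hSm : MeasurableSet (B \ Nn) := hB.diff (measurableSet_toMeasurable _ _)
    have hSge : D.μ B ≤ D.μ (B \ Nn) := by
      calc D.μ B ≤ D.μ (B ∩ Nn) + D.μ (B \ Nn) := measure_le_inter_add_diff _ _ _
        _ ≤ D.μ Nn + D.μ (B \ Nn) := add_le_add_left (measure_mono Set.inter_subset_right) _
        _ = D.μ (B \ Nn) := by rw [hNn0, zero_add]
    calc D.μ B ≤ D.μ (B \ Nn) := hSge
      _ = ∫⁻ x, (B \ Nn).indicator 1 x ∂D.μ := (lintegral_indicator_one hSm).symm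
      _ ≤ ∫⁻ x, Measure.count (En n ∩ D.r ⁻¹' {x}) ∂D.μ := by
          refine lintegral_mono fun x => ?_
          by_cases hx : x ∈ B \ Nn
          · rw [Set.indicator_of_mem hx]
            have hsat : x ∈ {x : X | ∃ γ : G, D.s γ ∈ Aseq n ∧ D.r γ = x} := by
              by_contra hns
              exact hx.2 (subset_toMeasurable _ _ hns)
            obtain ⟨γ, hγs, hγr⟩ := hsat
            have hγmem : γ ∈ En n ∩ D.r ⁻¹' {x} :=
              ⟨⟨hγs, by rw [Set.mem_preimage, hγr]; exact hx.1⟩, by simpa using hγr⟩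
            calc (1 : ENNReal) = Measure.count ({γ} : Set G) := (Measure.count_singleton γ).symm
              _ ≤ Measure.count (En n ∩ D.r ⁻¹' {x}) :=
                measure_mono (Set.singleton_subset_iff.2 hγmem)
          · rw [Set.indicator_of_notMem hx]
            exact zero_le
  -- finite sums give N * μ B ≤ gMeasure E
  have hsum : ∀ N : ℕ, (N : ENNReal) * D.μ B ≤ D.gMeasure E := by
    intro N
    have h1 : ∀ x : X, ∑ n ∈ Finset.range N, Measure.count (En n ∩ D.s ⁻¹' {x})
        ≤ Measure.count (E ∩ D.s ⁻¹' {x}) := by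
      intro x
      have hdisj : (↑(Finset.range N) : Set ℕ).PairwiseDisjoint
          (fun n => En n ∩ D.s ⁻¹' {x}) := by
        intro m _ k _ hmk
        refine Set.disjoint_left.2 fun γ hγm hγk => ?_
        exact Set.disjoint_left.1 (hdisjA m k hmk) hγm.1.1 hγk.1.1
      have hmeas' : ∀ n ∈ Finset.range N, MeasurableSet (En n ∩ D.s ⁻¹' {x}) := by
        intro n _
        exact Set.Countable.measurableSet
          ((D.countable_fibers x).mono Set.inter_subset_right)
      rw [← measure_biUnion_finset hdisj hmeas']
      refine measure_mono ?_
      intro γ hγ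
      simp only [Set.mem_iUnion] at hγ
      obtain ⟨n, -, hγn, hγx⟩ := hγ
      exact ⟨hEnsub n hγn, hγx⟩
    calc (N : ENNReal) * D.μ B = ∑ _n ∈ Finset.range N, D.μ B := by
          rw [Finset.sum_const, Finset.card_range, nsmul_eq_mul]
      _ ≤ ∑ n ∈ Finset.range N, D.gMeasure (En n) := Finset.sum_le_sum fun n _ => hlow n
      _ = ∑ n ∈ Finset.range N, ∫⁻ x, Measure.count (En n ∩ D.s ⁻¹' {x}) ∂D.μ := rfl
      _ ≤ ∫⁻ x, ∑ n ∈ Finset.range N, Measure.count (En n ∩ D.s ⁻¹' {x}) ∂D.μ :=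
          sum_lintegral_le _ _ _
      _ ≤ ∫⁻ x, Measure.count (E ∩ D.s ⁻¹' {x}) ∂D.μ := lintegral_mono h1
      _ = D.gMeasure E := rfl
  refine le_antisymm le_top ?_
  have htop : (⊤ : ENNReal) = (⨆ N : ℕ, (N : ENNReal)) * D.μ B := by
    rw [ENNReal.iSup_natCast, ENNReal.top_mul hB0]
  rw [htop, ENNReal.iSup_mul]
  exact iSup_le fun N => hsum N
end

section
/- Let f: X → Y be a Borel map between standard Borel spaces all of whose fibers are countable. Then the image f(X) is a Borel subset of Y, and there exists a countable Borel partition X = ⋃_{i∈ℕ} X_i such that the restriction of f to each X_i is injective. -/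
open MeasureTheory Set Function TopologicalSpace Metric

set_option linter.unusedSectionVars false

namespace LuzinNovikov

variable {X Y : Type} [MeasurableSpace X] [TopologicalSpace X] [PolishSpace X] [BorelSpace X]
  [TopologicalSpace Y] [T2Space Y]

/-- The "conflict set" of `C`: points sharing their `f`-fiber with a *different* point of `C`. -/
def cfl (f : X → Y) (C : Set X) : Set X :=
  Prod.fst '' {p : X × X | p.2 ∈ C ∧ p.1 ≠ p.2 ∧ f p.1 = f p.2}

lemma mem_cfl {f : X → Y} {C : Set X} {z : X} :
    z ∈ cfl f C ↔ ∃ w ∈ C, z ≠ w ∧ f z = f w := by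
  constructor
  · rintro ⟨⟨a, w⟩, ⟨hw, hne, hfe⟩, rfl⟩
    exact ⟨w, hw, hne, hfe⟩
  · rintro ⟨w, hw, hne, hfe⟩
    exact ⟨(z, w), ⟨hw, hne, hfe⟩, rfl⟩

lemma measurableSet_good {f : X → Y} (hf : Continuous f) {C : Set X} (hC : MeasurableSet C) :
    MeasurableSet {p : X × X | p.2 ∈ C ∧ p.1 ≠ p.2 ∧ f p.1 = f p.2} := by
  refine (measurable_snd hC).inter (MeasurableSet.inter ?_ ?_)
  · exact (isClosed_diagonal.measurableSet).compl
  · exact (isClosed_eq (hf.comp continuous_fst) (hf.comp continuous_snd)).measurableSet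

lemma analyticSet_cfl {f : X → Y} (hf : Continuous f) {C : Set X} (hC : MeasurableSet C) :
    AnalyticSet (cfl f C) :=
  ((measurableSet_good hf hC).analyticSet).image_of_continuous continuous_fst

/-- `cfl f K` is analytic even for analytic `K`. -/
lemma analyticSet_cfl' {f : X → Y} (hf : Continuous f) {K : Set X} (hK : AnalyticSet K) :
    AnalyticSet (cfl f K) := by
  rcases (AnalyticSet_def K).mp hK with rfl | ⟨g, hg, hgr⟩
  · convert analyticSet_empty
    rw [eq_empty_iff_forall_notMem]
    rintro z hz
    rw [mem_cfl] at hz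
    exact hz.choose_spec.1
  · have h1 : AnalyticSet ((univ : Set X) ×ˢ K) := by
      have : (univ : Set X) ×ˢ K = range (fun p : X × (ℕ → ℕ) => (p.1, g p.2)) := by
        ext ⟨a, b⟩
        simp only [mem_prod, mem_univ, true_and, mem_range, Prod.mk.injEq, Prod.exists]
        constructor
        · intro hb
          rw [← hgr] at hb
          obtain ⟨n, hn⟩ := hb
          exact ⟨a, n, rfl, hn⟩
        · rintro ⟨a', n, rfl, rfl⟩
          rw [← hgr]; exact mem_range_self n
      rw [this]
      exact analyticSet_range_of_polishSpace (continuous_fst.prodMk (hg.comp continuous_snd))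
    have h2 : {p : X × X | p.2 ∈ K ∧ p.1 ≠ p.2 ∧ f p.1 = f p.2}
        = ((univ : Set X) ×ˢ K) ∩ {p : X × X | p.1 ≠ p.2 ∧ f p.1 = f p.2} := by
      ext ⟨a, b⟩; simp [and_assoc]
    have h3 : AnalyticSet {p : X × X | p.2 ∈ K ∧ p.1 ≠ p.2 ∧ f p.1 = f p.2} := by
      rw [h2, Set.inter_eq_iInter]
      refine AnalyticSet.iInter fun b => ?_
      cases b
      · convert (MeasurableSet.analyticSet
          (((isClosed_diagonal (X := X)).measurableSet).compl.inter
            (isClosed_eq (hf.comp continuous_fst) (hf.comp continuous_snd)).measurableSet)) using 1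
        ext ⟨a, b⟩; simp
      · simpa using h1
    exact h3.image_of_continuous continuous_fst

/-- Extension lemma: an analytic set on which `f` is injective is contained in a Borel set
on which `f` is injective.  Proved by iterating the Lusin separation theorem. -/
lemma inj_extend {f : X → Y} (hf : Continuous f) {K : Set X} (hK : AnalyticSet K)
    (hinj : InjOn f K) : ∃ B : Set X, MeasurableSet B ∧ K ⊆ B ∧ InjOn f B := by
  classical
  -- `K` is disjoint from its own conflict set
  have hdK : Disjoint K (cfl f K) := by
    rw [disjoint_left]
    intro z hzK hzc
    rw [mem_cfl] at hzc
    obtain ⟨w, hwK, hne, hfe⟩ := hzc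
    exact hne (hinj hzK hwK hfe)
  -- initial separation
  obtain ⟨u0, hKu0, hdis0, hm0⟩ := hK.measurablySeparable (analyticSet_cfl' hf hK) hdK
  -- the carrier of the recursion
  let D := {C : Set X // MeasurableSet C ∧ K ⊆ C ∧ Disjoint C (cfl f K)}
  have hstep : ∀ C : D, ∃ C' : D, C'.1 ⊆ C.1 ∧ Disjoint C'.1 (cfl f C.1) := by
    rintro ⟨C, hCm, hKC, hCdis⟩
    have hdisj : Disjoint K (cfl f C) := by
      rw [disjoint_left]
      intro z hzK hzc
      rw [mem_cfl] at hzc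
      obtain ⟨w, hwC, hne, hfe⟩ := hzc
      have hwK : w ∈ cfl f K := mem_cfl.mpr ⟨z, hzK, fun h => hne h.symm, hfe.symm⟩
      exact (disjoint_left.mp hCdis) hwC hwK
    obtain ⟨u, hKu, hdis, hum⟩ := hK.measurablySeparable (analyticSet_cfl hf hCm) hdisj
    refine ⟨⟨C ∩ u, hCm.inter hum, subset_inter hKC hKu, hCdis.mono_left inter_subset_left⟩,
      inter_subset_left, ?_⟩
    exact (hdis.mono_right inter_subset_right).symm
  choose stepF hsub hdisj using hstep
  set C0 : D := ⟨u0, hm0, hKu0, hdis0.symm⟩ with hC0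
  set seq : ℕ → D := fun n => stepF^[n] C0 with hseq
  have hseqsucc : ∀ n, seq (n + 1) = stepF (seq n) := fun n => Function.iterate_succ_apply' _ _ _
  refine ⟨⋂ n, (seq n).1, MeasurableSet.iInter fun n => (seq n).2.1,
    subset_iInter fun n => (seq n).2.2.1, ?_⟩
  intro z hz w hw hfe
  by_contra hne
  have hzc : z ∈ cfl f (seq 0).1 := mem_cfl.mpr ⟨w, (mem_iInter.mp hw) 0, hne, hfe⟩
  have hz1 : z ∈ (seq 1).1 := (mem_iInter.mp hz) 1
  rw [hseqsucc 0] at hz1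
  exact (disjoint_left.mp (hdisj (seq 0))) hz1 hzc

/-- Configuration sets: tuples of points of `S`, lying in prescribed boxes, all in one fiber. -/
def Cfg (f : X → Y) (S : Set X) (k : ℕ) (b : (Fin k → Bool) → Set X) :
    Set ((Fin k → Bool) → X) :=
  {x | (∀ σ, x σ ∈ S ∩ b σ) ∧ ∀ σ τ, f (x σ) = f (x τ)}

lemma Cfg_mono {f : X → Y} {S S' : Set X} (h : S ⊆ S') {k : ℕ} {b : (Fin k → Bool) → Set X} :
    Cfg f S k b ⊆ Cfg f S' k b := by
  rintro x ⟨h1, h2⟩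
  exact ⟨fun σ => ⟨h (h1 σ).1, (h1 σ).2⟩, h2⟩

lemma measurableSet_Cfg {f : X → Y} (hf : Continuous f) {S : Set X} (hS : MeasurableSet S)
    {k : ℕ} {b : (Fin k → Bool) → Set X} (hb : ∀ σ, IsOpen (b σ)) :
    MeasurableSet (Cfg f S k b) := by
  have : Cfg f S k b = (⋂ σ, (fun x : (Fin k → Bool) → X => x σ) ⁻¹' (S ∩ b σ)) ∩
      ⋂ σ, ⋂ τ, {x : (Fin k → Bool) → X | f (x σ) = f (x τ)} := by
    ext x
    simp only [Cfg, mem_setOf_eq, mem_inter_iff, mem_iInter, mem_preimage]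
  rw [this]
  refine MeasurableSet.inter (MeasurableSet.iInter fun σ => ?_)
    (MeasurableSet.iInter fun σ => MeasurableSet.iInter fun τ => ?_)
  · exact (measurable_pi_apply σ) (hS.inter (hb σ).measurableSet)
  · exact (isClosed_eq (hf.comp (continuous_apply σ)) (hf.comp (continuous_apply τ))).measurableSet

/-- The key "core" construction: a Borel set `Xc`, co-countably-injectively-covered,
such that every nonempty basic configuration piece over `Xc` splits at any prescribed
coordinate. -/
lemma exists_core {f : X → Y} (hf : Continuous f) {ℬ : Set (Set X)} (hBc : ℬ.Countable)
    (hBo : ∀ U ∈ ℬ, IsOpen U) :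
    ∃ (Xc : Set X) (S : ℕ → Set X), MeasurableSet Xc ∧
      (∀ n, MeasurableSet (S n) ∧ InjOn f (S n)) ∧ univ \ (⋃ n, S n) ⊆ Xc ∧
      ∀ (k : ℕ) (b : (Fin k → Bool) → Set X), (∀ σ, b σ ∈ ℬ) → ∀ sk : Fin k → Bool,
        (Cfg f Xc k b).Nonempty →
        ∃ z ∈ Cfg f Xc k b, ∃ w ∈ Cfg f Xc k b, z sk ≠ w sk ∧ f (z sk) = f (w sk) := by
  classical
  haveI : Countable ↥ℬ := hBc.to_subtype
  set Idx := (k : ℕ) × ((Fin k → Bool) → ↥ℬ) with hIdx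
  set J : Set Idx := {i | ∃ 𝒯 : Set (Set X), 𝒯.Countable ∧
    (∀ B ∈ 𝒯, MeasurableSet B ∧ InjOn f B) ∧
    Cfg f (univ \ ⋃₀ 𝒯) i.1 (fun σ => ((i.2 σ : Set X))) = ∅} with hJ
  have hWex : ∀ i : Idx, ∃ 𝒯 : Set (Set X), (𝒯.Countable ∧
      (∀ B ∈ 𝒯, MeasurableSet B ∧ InjOn f B)) ∧
      (i ∈ J → Cfg f (univ \ ⋃₀ 𝒯) i.1 (fun σ => ((i.2 σ : Set X))) = ∅) := by
    intro i
    by_cases hi : i ∈ J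
    · obtain ⟨𝒯, h1, h2, h3⟩ := hi
      exact ⟨𝒯, ⟨h1, h2⟩, fun _ => h3⟩
    · exact ⟨∅, ⟨countable_empty, fun B hB => absurd hB (notMem_empty B)⟩, fun h => absurd h hi⟩
  choose W hW1 hW2 using hWex
  set 𝒮 : Set (Set X) := ⋃ i : Idx, W i with h𝒮
  have h𝒮c : 𝒮.Countable := countable_iUnion fun i => (hW1 i).1
  have h𝒮p : ∀ B ∈ 𝒮, MeasurableSet B ∧ InjOn f B := by
    intro B hB
    rw [h𝒮, mem_iUnion] at hB
    obtain ⟨i, hi⟩ := hB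
    exact (hW1 i).2 B hi
  set Xc : Set X := univ \ ⋃₀ 𝒮 with hXc
  obtain ⟨S, hSr⟩ := (h𝒮c.insert ∅).exists_eq_range (insert_nonempty _ _)
  have hSmem : ∀ n, S n ∈ insert ∅ 𝒮 := by
    intro n; rw [hSr]; exact mem_range_self n
  have hSp : ∀ n, MeasurableSet (S n) ∧ InjOn f (S n) := by
    intro n
    rcases hSmem n with h | h
    · rw [h]; exact ⟨MeasurableSet.empty, injOn_empty f⟩
    · exact h𝒮p _ h
  have hSU : (⋃ n, S n) = ⋃₀ 𝒮 := by
    apply subset_antisymm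
    · exact iUnion_subset fun n => by
        rcases hSmem n with h | h
        · rw [h]; exact empty_subset _
        · exact subset_sUnion_of_mem h
    · intro x hx
      obtain ⟨B, hB, hxB⟩ := hx
      have : B ∈ range S := by rw [← hSr]; exact mem_insert_of_mem _ hB
      obtain ⟨n, rfl⟩ := this
      exact mem_iUnion.mpr ⟨n, hxB⟩
  refine ⟨Xc, S, ?_, hSp, ?_, ?_⟩
  · exact MeasurableSet.univ.diff (MeasurableSet.sUnion h𝒮c fun B hB => (h𝒮p B hB).1)
  · rw [hSU]
  · intro k b hb sk hne
    by_contra hcon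
    push_neg at hcon
    -- `f` is injective on the image of the evaluation map
    have hK : InjOn f ((fun x : (Fin k → Bool) → X => x sk) '' Cfg f Xc k b) := by
      rintro _ ⟨z, hz, rfl⟩ _ ⟨w, hw, rfl⟩ hfe
      by_contra hne'
      exact (hcon z hz w hw hne') hfe
    have hXcm : MeasurableSet Xc :=
      MeasurableSet.univ.diff (MeasurableSet.sUnion h𝒮c fun B hB => (h𝒮p B hB).1)
    have hCm : MeasurableSet (Cfg f Xc k b) :=
      measurableSet_Cfg hf hXcm fun σ => hBo _ (hb σ)
    have hKan : AnalyticSet ((fun x : (Fin k → Bool) → X => x sk) '' Cfg f Xc k b) :=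
      (hCm.analyticSet).image_of_continuous (continuous_apply sk)
    obtain ⟨B, hBm, hKB, hBinj⟩ := inj_extend hf hKan hK
    set i : Idx := ⟨k, fun σ => ⟨b σ, hb σ⟩⟩ with hi
    have hiJ : i ∈ J := by
      refine ⟨insert B 𝒮, h𝒮c.insert B, ?_, ?_⟩
      · intro B' hB'
        rcases hB' with h | h
        · rw [h]; exact ⟨hBm, hBinj⟩
        · exact h𝒮p _ h
      · rw [eq_empty_iff_forall_notMem]
        intro y hy
        have hsub : univ \ ⋃₀ insert B 𝒮 ⊆ Xc := by
          rw [hXc]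
          exact diff_subset_diff_right (sUnion_subset_sUnion (subset_insert _ _))
        have hyXc : y ∈ Cfg f Xc k b := Cfg_mono hsub hy
        have hyB : y sk ∈ B := hKB (mem_image_of_mem _ hyXc)
        have : y sk ∈ univ \ ⋃₀ insert B 𝒮 := (hy.1 sk).1
        exact this.2 ⟨B, mem_insert _ _, hyB⟩
    have hempty := hW2 i hiJ
    have hsub2 : Xc ⊆ univ \ ⋃₀ (W i) := by
      rw [hXc]
      refine diff_subset_diff_right (sUnion_subset_sUnion ?_)
      rw [h𝒮]
      exact subset_iUnion (fun j : Idx => W j) i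
    obtain ⟨x, hx⟩ := hne
    have : x ∈ Cfg f (univ \ ⋃₀ (W i)) k (fun σ => ((i.2 σ : Set X))) := Cfg_mono hsub2 hx
    rw [hempty] at this
    exact this

/-- Core theorem: a continuous map on a Polish space with countable fibers admits a countable
Borel cover by sets on which it is injective. -/
lemma exists_dense_seq : ∃ s : ℕ → ℕ → Bool,
    ∀ (m : ℕ) (w : ℕ → Bool), ∃ n, m ≤ n ∧ ∀ i < m, s n i = w i := by
  classical
  refine ⟨fun n i => ((Encodable.decode (α := ℕ × List Bool) n).map Prod.snd).elim false
    (fun L => L.getD i false), ?_⟩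
  intro m w
  set L : List Bool := List.ofFn (fun i : Fin m => w i) with hL
  have hinj : Function.Injective (fun j : ℕ => Encodable.encode (j, L)) := by
    intro a b h
    have := Encodable.encode_injective h
    exact ((Prod.mk.injEq _ _ _ _).mp this).1
  obtain ⟨n, hn, hmn⟩ := (Set.infinite_range_of_injective hinj).exists_gt m
  obtain ⟨j, rfl⟩ := hn
  refine ⟨_, le_of_lt hmn, ?_⟩
  intro i hi
  have hlen : i < L.length := by simpa [hL] using hi
  simp only [Encodable.encodek, Option.map_some, Option.elim_some]
  rw [List.getD_eq_getElem _ _ hlen]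
  simp [hL]

/-- If the core is nonempty, a Cantor scheme produces uncountably many points in one fiber
(contradiction, via Baire category).  Hence the core is empty. -/
lemma core_empty {f : X → Y} (hf : Continuous f) (hfib : ∀ y : Y, (f ⁻¹' {y}).Countable)
    {ℬ : Set (Set X)} (hB : IsTopologicalBasis ℬ) {Xc : Set X}
    (hsplit : ∀ (k : ℕ) (b : (Fin k → Bool) → Set X), (∀ σ, b σ ∈ ℬ) → ∀ sk : Fin k → Bool,
      (Cfg f Xc k b).Nonempty →
      ∃ z ∈ Cfg f Xc k b, ∃ w ∈ Cfg f Xc k b, z sk ≠ w sk ∧ f (z sk) = f (w sk)) :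
    Xc = ∅ := by
  classical
  rw [eq_empty_iff_forall_notMem]
  intro x0 hx0
  letI := upgradeIsCompletelyMetrizable X
  obtain ⟨s, hs⟩ := exists_dense_seq
  -- the type of levels of the scheme
  let T : ℕ → Type := fun k => {p : ((Fin k → Bool) → X) × ((Fin k → Bool) → Set X) //
    (∀ σ, p.2 σ ∈ ℬ) ∧ p.1 ∈ Cfg f Xc k p.2 ∧ ∀ σ, p.2 σ ⊆ ball (p.1 σ) ((1/2 : ℝ)^k)}
  -- base level
  obtain ⟨U0, hU0B, hx0U0, hU0b⟩ := hB.mem_nhds_iff.mp (ball_mem_nhds x0 one_pos)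
  have base : T 0 := ⟨⟨fun _ => x0, fun _ => U0⟩, fun _ => hU0B,
    ⟨fun _ => ⟨hx0, hx0U0⟩, fun _ _ => rfl⟩, fun _ => by simpa using hU0b⟩
  -- the inductive step
  have hstep : ∀ (k : ℕ) (p : T k), ∃ q : T (k+1),
      (∀ τ, closure (q.1.2 τ) ⊆ p.1.2 (Fin.init τ)) ∧
      (∀ τ τ' : Fin (k+1) → Bool,
        (∀ i : Fin k, τ i.castSucc = s k i) → (∀ i : Fin k, τ' i.castSucc = s k i) →
        τ (Fin.last k) = false → τ' (Fin.last k) = true →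
        Disjoint (closure (q.1.2 τ)) (closure (q.1.2 τ'))) := by
    rintro k ⟨⟨xk, Uk⟩, hUB, hxC, hUb⟩
    obtain ⟨z, hz, w, hw, hne, hfe⟩ := hsplit k Uk hUB (fun i => s k i) ⟨xk, hxC⟩
    set sk : Fin k → Bool := fun i => s k i with hsk
    set r := dist (z sk) (w sk) with hr
    have hrpos : 0 < r := dist_pos.mpr hne
    set x' : (Fin (k+1) → Bool) → X :=
      fun τ => if τ (Fin.last k) then w (Fin.init τ) else z (Fin.init τ) with hx'
    have hx'mem : ∀ τ, x' τ ∈ Xc ∩ Uk (Fin.init τ) := by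
      intro τ
      by_cases h : τ (Fin.last k) = true
      · simp only [hx', h, if_true]
        exact hw.1 (Fin.init τ)
      · rw [Bool.not_eq_true] at h
        simp only [hx', h, Bool.false_eq_true, if_false]
        exact hz.1 (Fin.init τ)
    have hx'const : ∀ τ τ', f (x' τ) = f (x' τ') := by
      have h1 : ∀ τ, f (x' τ) = f (z sk) := by
        intro τ
        by_cases h : τ (Fin.last k) = true
        · simp only [hx', h, if_true]
          rw [hw.2 (Fin.init τ) sk]
          exact hfe.symm
        · rw [Bool.not_eq_true] at h
          simp only [hx', h, Bool.false_eq_true, if_false]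
          exact hz.2 (Fin.init τ) sk
      intro τ τ'
      rw [h1 τ, h1 τ']
    have hchoice : ∀ τ : Fin (k+1) → Bool, ∃ V, V ∈ ℬ ∧ x' τ ∈ V ∧
        V ⊆ ball (x' τ) ((1/2 : ℝ)^(k+1)) ∧ closure V ⊆ Uk (Fin.init τ) ∧
        closure V ⊆ closedBall (x' τ) (r/3) := by
      intro τ
      set c := x' τ with hc
      have hcU : c ∈ Uk (Fin.init τ) := (hx'mem τ).2
      set O := Uk (Fin.init τ) ∩ ball c (min ((1/2 : ℝ)^(k+1)) (r/3)) with hO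
      have hOopen : IsOpen O := (hB.isOpen (hUB _)).inter isOpen_ball
      have hminpos : (0:ℝ) < min ((1/2 : ℝ)^(k+1)) (r/3) := by positivity
      have hcO : c ∈ O := ⟨hcU, mem_ball_self hminpos⟩
      obtain ⟨ε, hεpos, hεsub⟩ := Metric.isOpen_iff.mp hOopen c hcO
      obtain ⟨V, hVB, hcV, hVsub⟩ := hB.mem_nhds_iff.mp (ball_mem_nhds c (half_pos hεpos))
      have hVc : closure V ⊆ closedBall c (ε/2) :=
        (closure_mono hVsub).trans closure_ball_subset_closedBall
      have hsub2 : closedBall c (ε/2) ⊆ ball c ε := closedBall_subset_ball (by linarith)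
      have hVO : closure V ⊆ O := (hVc.trans hsub2).trans hεsub
      refine ⟨V, hVB, hcV, ?_, ?_, ?_⟩
      · intro p hp
        have := (hVO (subset_closure hp)).2
        rw [mem_ball] at this ⊢
        exact lt_of_lt_of_le this (min_le_left _ _)
      · exact hVO.trans inter_subset_left
      · intro p hp
        have := (hVO hp).2
        rw [mem_ball] at this
        rw [mem_closedBall]
        exact le_of_lt (lt_of_lt_of_le this (min_le_right _ _))
    choose U' hU'B hx'U' hU'small hU'nest hU'cb using hchoice
    refine ⟨⟨⟨x', U'⟩, hU'B, ⟨fun τ => ⟨(hx'mem τ).1, hx'U' τ⟩, hx'const⟩, hU'small⟩,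
      hU'nest, ?_⟩
    intro τ τ' hτ hτ' hlast hlast'
    have hxτ : x' τ = z sk := by
      have hi : Fin.init τ = sk := funext fun i => hτ i
      simp only [hx', hlast, Bool.false_eq_true, if_false, hi]
    have hxτ' : x' τ' = w sk := by
      have hi : Fin.init τ' = sk := funext fun i => hτ' i
      simp only [hx', hlast', if_true, hi]
    have h1 : closure (U' τ) ⊆ closedBall (z sk) (r/3) := by rw [← hxτ]; exact hU'cb τ
    have h2 : closure (U' τ') ⊆ closedBall (w sk) (r/3) := by rw [← hxτ']; exact hU'cb τ'
    rw [Set.disjoint_left]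
    intro p hp1 hp2
    have hd1 : dist p (z sk) ≤ r/3 := mem_closedBall.mp (h1 hp1)
    have hd2 : dist p (w sk) ≤ r/3 := mem_closedBall.mp (h2 hp2)
    have htri : dist (z sk) (w sk) ≤ dist p (z sk) + dist p (w sk) := dist_triangle_left _ _ _
    rw [← hr] at htri
    linarith
  -- build the scheme by recursion
  choose stepF hnest hsepr using hstep
  let seq : ∀ k, T k := fun k => Nat.rec base (fun k p => stepF k p) k
  have hseq : ∀ k, seq (k+1) = stepF k (seq k) := fun _ => rfl
  let rk : (ℕ → Bool) → ∀ k, Fin k → Bool := fun α k i => α i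
  have hinit : ∀ (α : ℕ → Bool) (k : ℕ), Fin.init (rk α (k+1)) = rk α k := by
    intro α k
    funext i
    show α (Fin.castSucc i : Fin (k+1)) = α i
    rw [Fin.coe_castSucc]
  let xs : (ℕ → Bool) → ℕ → X := fun α k => (seq k).1.1 (rk α k)
  have hxsU : ∀ α k, xs α k ∈ (seq k).1.2 (rk α k) := fun α k => ((seq k).2.2.1.1 (rk α k)).2
  have hUchain : ∀ (α : ℕ → Bool) (k : ℕ),
      (seq (k+1)).1.2 (rk α (k+1)) ⊆ (seq k).1.2 (rk α k) := by
    intro α k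
    have h1 := hnest k (seq k) (rk α (k+1))
    rw [hinit α k] at h1
    exact subset_closure.trans h1
  have hUchain' : ∀ (α : ℕ → Bool) (k m : ℕ), k ≤ m →
      (seq m).1.2 (rk α m) ⊆ (seq k).1.2 (rk α k) := by
    intro α k m hkm
    induction m, hkm using Nat.le_induction with
    | base => exact subset_rfl
    | succ m hm ih => exact (hUchain α m).trans ih
  have hxsmem : ∀ (α : ℕ → Bool) (k m : ℕ), k ≤ m → xs α m ∈ (seq k).1.2 (rk α k) :=
    fun α k m h => hUchain' α k m h (hxsU α m)
  have hsmall : ∀ (α : ℕ → Bool) (k : ℕ),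
      (seq k).1.2 (rk α k) ⊆ ball (xs α k) ((1/2 : ℝ)^k) := fun α k => (seq k).2.2.2 (rk α k)
  have hcauchy : ∀ α, CauchySeq (xs α) := by
    intro α
    apply cauchySeq_of_le_geometric (1/2 : ℝ) 1 (by norm_num)
    intro n
    have h1 : xs α (n+1) ∈ ball (xs α n) ((1/2:ℝ)^n) :=
      hsmall α n (hxsmem α n (n+1) (Nat.le_succ n))
    rw [mem_ball] at h1
    rw [dist_comm, one_mul]
    exact le_of_lt h1
  have hφex : ∀ α, ∃ p, Filter.Tendsto (xs α) Filter.atTop (nhds p) :=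
    fun α => cauchySeq_tendsto_of_complete (hcauchy α)
  choose φ hφ using hφex
  have hφclos : ∀ α k, φ α ∈ closure ((seq k).1.2 (rk α k)) := by
    intro α k
    apply mem_closure_of_tendsto (hφ α)
    filter_upwards [Filter.eventually_ge_atTop k] with m hm
    exact hxsmem α k m hm
  have hφdist : ∀ α k, dist (φ α) (xs α k) ≤ (1/2 : ℝ)^k := by
    intro α k
    have h1 : closure ((seq k).1.2 (rk α k)) ⊆ closedBall (xs α k) ((1/2:ℝ)^k) :=
      (closure_mono (hsmall α k)).trans closure_ball_subset_closedBall
    exact mem_closedBall.mp (h1 (hφclos α k))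
  have hφconst : ∀ α β, f (φ α) = f (φ β) := by
    intro α β
    have h1 : Filter.Tendsto (fun k => f (xs α k)) Filter.atTop (nhds (f (φ α))) :=
      (hf.tendsto _).comp (hφ α)
    have h2 : Filter.Tendsto (fun k => f (xs β k)) Filter.atTop (nhds (f (φ β))) :=
      (hf.tendsto _).comp (hφ β)
    have h3 : (fun k => f (xs α k)) = fun k => f (xs β k) := by
      funext k
      exact (seq k).2.2.1.2 (rk α k) (rk β k)
    rw [h3] at h1
    exact tendsto_nhds_unique h1 h2
  have hφcont : Continuous φ := by
    rw [continuous_iff_continuousAt]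
    intro α
    rw [ContinuousAt, Metric.tendsto_nhds]
    intro ε hε
    obtain ⟨k, hk⟩ : ∃ k : ℕ, (1/2:ℝ)^k < ε/2 :=
      exists_pow_lt_of_lt_one (by linarith) (by norm_num)
    have hopen : IsOpen {β : ℕ → Bool | ∀ i : Fin k, β i = α i} := by
      have heq : {β : ℕ → Bool | ∀ i : Fin k, β i = α i}
          = ⋂ i : Fin k, (fun β : ℕ → Bool => β (i : ℕ)) ⁻¹' {α (i : ℕ)} := by
        ext β; simp
      rw [heq]
      exact isOpen_iInter_of_finite fun i =>
        (continuous_apply (i : ℕ)).isOpen_preimage _ (isOpen_discrete _)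
    filter_upwards [hopen.mem_nhds (by simp : α ∈ _)] with β hβ
    have hrk : rk β k = rk α k := funext fun i => hβ i
    have hxx : xs β k = xs α k := by
      show (seq k).1.1 (rk β k) = (seq k).1.1 (rk α k)
      rw [hrk]
    have h1 := hφdist β k
    have h2 := hφdist α k
    calc dist (φ β) (φ α) ≤ dist (φ β) (xs β k) + dist (xs β k) (φ α) := dist_triangle _ _ _
      _ = dist (φ β) (xs β k) + dist (φ α) (xs α k) := by rw [hxx, dist_comm (xs α k) (φ α)]
      _ < ε := by linarith
  -- Baire category argument
  set y0 := f (φ (fun _ => false)) with hy0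
  have hfibmem : ∀ α, φ α ∈ f ⁻¹' {y0} := by
    intro α
    rw [mem_preimage, mem_singleton_iff, hy0]
    exact hφconst α (fun _ => false)
  haveI : Countable ↥(f ⁻¹' {y0}) := (hfib y0).to_subtype
  have hcover : (⋃ v : ↥(f ⁻¹' {y0}), φ ⁻¹' {(v : X)}) = univ := by
    rw [eq_univ_iff_forall]
    intro α
    exact mem_iUnion.mpr ⟨⟨φ α, hfibmem α⟩, rfl⟩
  have hclosed : ∀ v : ↥(f ⁻¹' {y0}), IsClosed (φ ⁻¹' {(v : X)}) :=
    fun v => isClosed_singleton.preimage hφcont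
  obtain ⟨v, hv⟩ := nonempty_interior_of_iUnion_of_closed hclosed hcover
  obtain ⟨γ, hγ⟩ := hv
  obtain ⟨I, u, huo, hIu⟩ := isOpen_pi_iff.mp isOpen_interior γ hγ
  set m := (I.sup id) + 1 with hm
  obtain ⟨n, hnm, hns⟩ := hs m γ
  have hmem : ∀ δ : ℕ → Bool, (∀ i ∈ I, δ i = γ i) → φ δ = (v : X) := by
    intro δ hδ
    have hpi : δ ∈ (↑I : Set ℕ).pi u := by
      intro i hi
      rw [hδ i hi]
      exact (huo i hi).2
    have := interior_subset (hIu hpi)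
    rwa [mem_preimage, mem_singleton_iff] at this
  have hiI : ∀ i ∈ I, i < m := fun i hi => Nat.lt_succ_of_le (Finset.le_sup (f := id) hi)
  set α : ℕ → Bool := fun i => if i < n then s n i else false with hα
  set β : ℕ → Bool := fun i => if i < n then s n i else (if i = n then true else false) with hβ
  have hαv : φ α = (v : X) := by
    apply hmem
    intro i hi
    have h1 : i < m := hiI i hi
    have h2 : i < n := lt_of_lt_of_le h1 hnm
    show (if i < n then s n i else false) = γ i
    rw [if_pos h2]
    exact hns i h1
  have hβv : φ β = (v : X) := by
    apply hmem
    intro i hi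
    have h1 : i < m := hiI i hi
    have h2 : i < n := lt_of_lt_of_le h1 hnm
    show (if i < n then s n i else _) = γ i
    rw [if_pos h2]
    exact hns i h1
  have hτ : ∀ i : Fin n, (rk α (n+1)) i.castSucc = s n i := by
    intro i
    show α ((Fin.castSucc i : Fin (n+1)) : ℕ) = s n i
    rw [Fin.coe_castSucc]
    show (if (i:ℕ) < n then s n i else false) = s n i
    rw [if_pos i.isLt]
  have hτ' : ∀ i : Fin n, (rk β (n+1)) i.castSucc = s n i := by
    intro i
    show β ((Fin.castSucc i : Fin (n+1)) : ℕ) = s n i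
    rw [Fin.coe_castSucc]
    show (if (i:ℕ) < n then s n i else _) = s n i
    rw [if_pos i.isLt]
  have hlast : (rk α (n+1)) (Fin.last n) = false := by
    show α ((Fin.last n : Fin (n+1)) : ℕ) = false
    rw [Fin.val_last]
    show (if n < n then s n n else false) = false
    rw [if_neg (lt_irrefl n)]
  have hlast' : (rk β (n+1)) (Fin.last n) = true := by
    show β ((Fin.last n : Fin (n+1)) : ℕ) = true
    rw [Fin.val_last]
    show (if n < n then s n n else (if n = n then true else false)) = true
    rw [if_neg (lt_irrefl n), if_pos rfl]
  have hdisj := hsepr n (seq n) (rk α (n+1)) (rk β (n+1)) hτ hτ' hlast hlast'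
  have hφαmem : φ α ∈ closure ((stepF n (seq n)).1.2 (rk α (n+1))) := hφclos α (n+1)
  have hφβmem : φ β ∈ closure ((stepF n (seq n)).1.2 (rk β (n+1))) := hφclos β (n+1)
  rw [hαv] at hφαmem
  rw [hβv] at hφβmem
  exact Set.disjoint_left.mp hdisj hφαmem hφβmem

theorem core {f : X → Y} (hf : Continuous f) (hfib : ∀ y : Y, (f ⁻¹' {y}).Countable) :
    ∃ S : ℕ → Set X, (∀ n, MeasurableSet (S n) ∧ InjOn f (S n)) ∧ (⋃ n, S n) = univ := by
  classical
  obtain ⟨ℬ, hBc, hBem, hB⟩ := exists_countable_basis X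
  obtain ⟨Xc, S, hXcm, hSp, hScov, hsplit⟩ := exists_core hf hBc (fun U hU => hB.isOpen hU)
  have hXce : Xc = ∅ := core_empty hf hfib hB hsplit
  refine ⟨S, hSp, ?_⟩
  rw [eq_univ_iff_forall]
  intro x
  by_contra hx
  have : x ∈ univ \ (⋃ n, S n) := ⟨mem_univ x, hx⟩
  have := hScov this
  rw [hXce] at this
  exact this

end LuzinNovikov

/-- Luzin–Novikov selection theorem: a Borel map between standard Borel
spaces with countable fibers has Borel image, and the domain admits a countable Borel
partition on whose pieces the map is injective. -/
theorem luzin_novikov_selection {X Y : Type}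
    [MeasurableSpace X] [StandardBorelSpace X]
    [MeasurableSpace Y] [StandardBorelSpace Y]
    (f : X → Y) (hf : Measurable f)
    (hfib : ∀ y : Y, (f ⁻¹' {y}).Countable) :
    MeasurableSet (Set.range f) ∧
    ∃ Xi : ℕ → Set X,
      (∀ i, MeasurableSet (Xi i)) ∧
      Pairwise (Function.onFun Disjoint Xi) ∧
      (⋃ i, Xi i) = Set.univ ∧
      ∀ i, Set.InjOn f (Xi i) := by
  classical
  letI := upgradeStandardBorel X
  letI := upgradeStandardBorel Y
  obtain ⟨t', ht'le, hcont, hpol⟩ := hf.exists_continuous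
  have hbeq : @borel X t' = @borel X (upgradeStandardBorel X).toTopologicalSpace :=
    @borel_eq_borel_of_le X t' (upgradeStandardBorel X).toTopologicalSpace hpol
      (upgradeStandardBorel X).toPolishSpace ht'le
  have hb' : @BorelSpace X t' _ := by
    constructor
    rw [hbeq]
    exact (upgradeStandardBorel X).toBorelSpace.measurable_eq
  obtain ⟨S, hS, hSu⟩ := @LuzinNovikov.core X Y _ t' hpol hb' _ (by infer_instance) f hcont hfib
  set Xi : ℕ → Set X := disjointed S with hXi
  have hXim : ∀ i, MeasurableSet (Xi i) := MeasurableSet.disjointed (fun n => (hS n).1)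
  have hXiu : (⋃ i, Xi i) = Set.univ := by rw [hXi, iUnion_disjointed, hSu]
  have hXiinj : ∀ i, Set.InjOn f (Xi i) := fun i => ((hS i).2).mono (disjointed_subset S i)
  refine ⟨?_, Xi, hXim, disjoint_disjointed S, hXiu, hXiinj⟩
  have : Set.range f = ⋃ i, f '' (Xi i) := by
    rw [← image_iUnion, hXiu, image_univ]
  rw [this]
  exact MeasurableSet.iUnion fun i => (hXim i).image_of_measurable_injOn hf (hXiinj i)
end

section
/- Let A be an abelian category with enough injective objects, equipped with a completion functor and rank metric structure as in the category of complete R(G,μ)-modules. Let Z be an injective object. Then, by transfinite induction along an ordinal α of uncountable cofinality — setting Z_0 = Z, taking Z_{β+1} to be an injective module containing the completion of Z_β, and Z_β = ⋃_{β'<β} Z_{β'} at limit ordinals — the module Z_α is complete. In particular the category of complete R(G,μ)-modules has enough injective objects. -/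
/-- construction of enough injectives in the category of complete modules:
let `R` be a ring (e.g. the groupoid ring `R(G,μ)`), `W` an ambient complete metric
`R`-module (completeness playing the role of the rank-metric completion), and `α` an
ordinal of uncountable cofinality. Given a transfinite chain of submodules `Z_β` with
`Z_0` injective, `Z_{β+1}` an injective module containing the completion (closure) of
`Z_β`, and `Z_β = ⋃_{β' < β} Z_{β'}` at limit ordinals, the module `Z_α` is complete.
(In particular the category of complete `R(G,μ)`-modules has enough injectives.) -/
theorem transfinite_injective_completion (R : Type) [Ring R]
    (W : Type) [AddCommGroup W] [Module R W] [PseudoMetricSpace W] [CompleteSpace W]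
    (α : Ordinal) (hcof : Cardinal.aleph0 < α.cof)
    (Z : Ordinal → Submodule R W)
    (hinj0 : Module.Injective R ↥(Z 0))
    (hmono : ∀ β γ : Ordinal, β ≤ γ → γ ≤ α → Z β ≤ Z γ)
    (hlimit : ∀ β ≤ α, Order.IsSuccLimit β →
      (Z β : Set W) = ⋃ (γ : Ordinal) (_ : γ < β), (Z γ : Set W))
    (hsucc : ∀ β < α, closure (Z β : Set W) ⊆ (Z (β + 1) : Set W) ∧
      Module.Injective R ↥(Z (β + 1))) :
    IsComplete (Z α : Set W) := by
  have hαlim : Order.IsSuccLimit α := Ordinal.aleph0_le_cof.mp hcof.le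
  intro f hf hfs
  obtain ⟨x, hx⟩ := CompleteSpace.complete hf
  haveI : f.NeBot := hf.1
  -- choose a sequence in Z α converging to x
  have hsel : ∀ n : ℕ, ∃ u : W, u ∈ (Z α : Set W) ∧ dist u x < 1 / (n + 1) := by
    intro n
    have h1 : (Z α : Set W) ∈ f := hfs (Filter.mem_principal_self _)
    have h2 : Metric.ball x (1 / (n + 1)) ∈ f :=
      hx (Metric.ball_mem_nhds x (by positivity))
    obtain ⟨u, hu1, hu2⟩ := Filter.nonempty_of_mem (Filter.inter_mem h1 h2)
    exact ⟨u, hu1, hu2⟩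
  choose u hu hud using hsel
  have hZα : (Z α : Set W) = ⋃ (γ : Ordinal) (_ : γ < α), (Z γ : Set W) :=
    hlimit α le_rfl hαlim
  have hg : ∀ n : ℕ, ∃ γ : Ordinal, γ < α ∧ u n ∈ (Z γ : Set W) := by
    intro n
    have := hu n
    rw [hZα] at this
    simpa using this
  choose g hgα hgu using hg
  have hβ : iSup g < α := Ordinal.iSup_lt_ord_lift (f := g) (c := α) (by simpa using hcof) hgα
  set β := iSup g with hβdef
  have huβ : ∀ n, u n ∈ (Z β : Set W) := fun n =>
    hmono (g n) β (Ordinal.le_iSup g n) hβ.le (hgu n)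
  have htend : Filter.Tendsto u Filter.atTop (nhds x) := by
    rw [Metric.tendsto_atTop]
    intro ε hε
    obtain ⟨N, hN⟩ := exists_nat_one_div_lt hε
    refine ⟨N, fun n hn => lt_of_lt_of_le (hud n) ?_⟩
    have : (N : ℝ) + 1 ≤ (n : ℝ) + 1 := by exact_mod_cast Nat.succ_le_succ hn
    exact le_trans (by gcongr) hN.le
  have hxcl : x ∈ closure (Z β : Set W) :=
    mem_closure_of_tendsto htend (Filter.Eventually.of_forall huβ)
  have hx1 : x ∈ (Z (β + 1) : Set W) := (hsucc β hβ).1 hxcl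
  have hxα : x ∈ (Z α : Set W) :=
    hmono (β + 1) α (hαlim.succ_lt hβ).le le_rfl hx1
  exact ⟨x, hxα, hx⟩
end
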